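/- In the suffix array SA of a string S with pairwise distinct suffixes, if [s..e] is the interval of suffixes starting with a string W of length t, and we refine it by the first t + j symbols (j ≥ 1), the resulting subintervals are exactly the intervals of suffixes starting with WZ over all strings Z of length j such that WZ occurs in S (suffixes shorter than t+j padded with terminators); moreover these subintervals appear in lexicographic order of Z. -/

import Mathlib

private lemma lex_take_aux {α : Type*} (r : α → α → Prop) :
    ∀ {l l' : List α}, List.Lex r l l' → ∀ k,
      l.take k = l'.take k ∨ List.Lex r (l.take k) (l'.take k) := by
  intro l l' h
  induction h with
  | nil =>
    intro k
    cases k with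
    | zero => left; rfl
    | succ k => right; simpa using List.Lex.nil
  | @cons a l₁ l₂ h ih =>
    intro k
    cases k with
    | zero => left; rfl
    | succ k =>
      rcases ih k with h1 | h1
      · left; simp [h1]
      · right; simpa using List.Lex.cons h1
  | @rel a l₁ b l₂ h =>
    intro k
    cases k with
    | zero => left; rfl
    | succ k => right; simpa using List.Lex.rel h

private lemma list_lt_iff_lex {α : Type*} [LinearOrder α] {l l' : List α} :
    l < l' ↔ List.Lex (· < ·) l l' := Iff.rfl

private lemma take_le_take_of_le {α : Type*} [LinearOrder α] {l l' : List α}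
    (h : l ≤ l') (k : ℕ) : l.take k ≤ l'.take k := by
  rcases eq_or_lt_of_le h with rfl | h
  · exact le_rfl
  · rcases lex_take_aux (· < ·) (list_lt_iff_lex.mp h) k with h1 | h1
    · exact le_of_eq h1
    · exact le_of_lt (list_lt_iff_lex.mpr h1)

private lemma append_lt_append_left' {α : Type*} [LinearOrder α] {Z Z' : List α}
    (W : List α) (h : Z < Z') : W ++ Z < W ++ Z' :=
  list_lt_iff_lex.mpr (List.Lex.append_left _ (list_lt_iff_lex.mp h) W)

/-- refining the suffix-array interval `[s..e]` of a string `W`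
of length `t` by the first `t + j` symbols yields exactly the intervals of
suffixes starting with `W ++ Z`, over the strings `Z` (of length `j`, or
shorter for truncated suffixes) such that `W ++ Z` occurs in `S`; moreover
these subintervals appear in lexicographic order of `Z`. -/
theorem refinement_subintervals_lex_order
    {α : Type*} [LinearOrder α] (S W : List α) (n t j : ℕ) (hn : n = S.length)
    (SA : ℕ → ℕ) (s e : ℕ)
    (hbij : Set.BijOn SA (Set.Iio n) (Set.Iio n))
    (hsort : ∀ a b : ℕ, a < b → b < n → S.drop (SA a) < S.drop (SA b))
    (hW : W.length = t) (he : e < n)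
    (hInt : ∀ i, i < n → ((s ≤ i ∧ i ≤ e) ↔ W <+: S.drop (SA i))) :
    -- each refined class is a contiguous interval
    (∀ Z : List α,
      {i : ℕ | i < n ∧ s ≤ i ∧ i ≤ e ∧
          (S.drop (SA i)).take (t + j) = W ++ Z}.Nonempty →
      ∃ a b : ℕ, a ≤ b ∧
        {i : ℕ | i < n ∧ s ≤ i ∧ i ≤ e ∧
          (S.drop (SA i)).take (t + j) = W ++ Z} = Set.Icc a b) ∧
    -- the subintervals appear in lexicographic order of Z
    (∀ Z Z' : List α, Z < Z' →
      ∀ i ∈ {i : ℕ | i < n ∧ s ≤ i ∧ i ≤ e ∧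
          (S.drop (SA i)).take (t + j) = W ++ Z},
      ∀ i' ∈ {i : ℕ | i < n ∧ s ≤ i ∧ i ≤ e ∧
          (S.drop (SA i)).take (t + j) = W ++ Z'}, i < i') ∧
    -- every rank of the interval lies in the class of some Z with W ++ Z
    -- occurring in S
    (∀ i, i < n → s ≤ i → i ≤ e → ∃ Z : List α, Z.length ≤ j ∧
      (W ++ Z) <:+: S ∧ (S.drop (SA i)).take (t + j) = W ++ Z) := by
  -- monotonicity of the truncated suffixes
  have hmono : ∀ a b : ℕ, a ≤ b → b < n →
      (S.drop (SA a)).take (t + j) ≤ (S.drop (SA b)).take (t + j) := by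
    intro a b hab hb
    rcases eq_or_lt_of_le hab with rfl | hab
    · exact le_rfl
    · exact take_le_take_of_le (le_of_lt (hsort a b hab hb)) _
  refine ⟨?_, ?_, ?_⟩
  · -- contiguity
    intro Z hne
    set T : Set ℕ := {i : ℕ | i < n ∧ s ≤ i ∧ i ≤ e ∧
        (S.drop (SA i)).take (t + j) = W ++ Z} with hT
    have hbdd : BddAbove T := ⟨e, fun x hx => hx.2.2.1⟩
    have hinterp : ∀ x ∈ T, ∀ y ∈ T, ∀ m, x ≤ m → m ≤ y → m ∈ T := by
      intro x hx y hy m hxm hmy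
      have hmn : m < n := lt_of_le_of_lt (hmy.trans hy.2.2.1) he
      refine ⟨hmn, hx.2.1.trans hxm, hmy.trans hy.2.2.1, ?_⟩
      have h1 := hmono x m hxm hmn
      have h2 := hmono m y hmy hy.1
      rw [hx.2.2.2] at h1
      rw [hy.2.2.2] at h2
      exact le_antisymm h2 h1
    refine ⟨sInf T, sSup T, csInf_le_csSup hne (OrderBot.bddBelow T) hbdd, ?_⟩
    ext m
    simp only [Set.mem_Icc]
    constructor
    · intro hm
      exact ⟨Nat.sInf_le hm, le_csSup hbdd hm⟩
    · rintro ⟨h1, h2⟩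
      exact hinterp _ (Nat.sInf_mem hne) _ (Nat.sSup_mem hne hbdd) m h1 h2
  · -- lexicographic order
    intro Z Z' hZZ i hi i' hi'
    by_contra hcon
    push_neg at hcon
    have hle : (S.drop (SA i')).take (t + j) ≤ (S.drop (SA i)).take (t + j) :=
      hmono i' i hcon hi.1
    rw [hi.2.2.2, hi'.2.2.2] at hle
    exact absurd hle (not_le.mpr (append_lt_append_left' W hZZ))
  · -- existence of Z
    intro i hi hsi hie
    have hpre : W <+: S.drop (SA i) := (hInt i hi).mp ⟨hsi, hie⟩
    obtain ⟨r, hr⟩ := hpre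
    refine ⟨r.take j, ?_, ?_, ?_⟩
    · exact List.length_take_le _ _
    · have h1 : W ++ r.take j <+: S.drop (SA i) := by
        rw [← hr]
        exact ⟨r.drop j, by simp⟩
      exact h1.isInfix.trans (List.drop_suffix _ _).isInfix
    · rw [← hr, List.take_add, ← hW, List.take_left]
      congr 1
      rw [hW, List.drop_left' hW]
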